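/- Let B be a strictly lower triangular real p×p matrix all of whose entries are nonnegative, and set M = (I − B)⁻¹. Then every entry of M is nonnegative, and for any three pairwise distinct indices j, r, k one has M_{kj} ≥ M_{kr} · M_{rj}. -/
import Mathlib


open Matrix

/-- Path-counting inequality used in the proof of Proposition 3 of the paper:
if the strictly lower triangular matrix `B` has nonnegative entries and
`M = (I - B)⁻¹`, then every entry of `M` is nonnegative and, for pairwise
distinct indices `j, r, k`, the total effect `M k j` dominates the part of the
effect flowing through `r`, namely `M k j ≥ M k r * M r j`. -/
theorem total_effect_dominates_through_effect
    {p : ℕ} (B : Matrix (Fin p) (Fin p) ℝ)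
    (hB : ∀ i j : Fin p, i ≤ j → B i j = 0)
    (hBnn : ∀ i j : Fin p, 0 ≤ B i j)
    (M : Matrix (Fin p) (Fin p) ℝ) (hM : M = (1 - B)⁻¹) :
    (∀ i j : Fin p, 0 ≤ M i j) ∧
    (∀ j r k : Fin p, j ≠ r → r ≠ k → j ≠ k → M k j ≥ M k r * M r j) := by
  have hdet : (1 - B).det = 1 := by
    have htri : (1 - B).BlockTriangular OrderDual.toDual := by
      intro i j hij
      have hij' : i < j := hij
      simp [Matrix.sub_apply, Matrix.one_apply_ne hij'.ne, hB i j hij'.le]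
    rw [Matrix.det_of_lowerTriangular _ htri]
    have : ∀ i : Fin p, (1 - B) i i = 1 := by
      intro i; simp [Matrix.sub_apply, hB i i le_rfl]
    simp [this]
  have hinv : (1 - B) * M = 1 := by
    rw [hM]
    exact Matrix.mul_nonsing_inv _ (by simp [hdet])
  have hrec : ∀ k j : Fin p, M k j = (if k = j then (1:ℝ) else 0) + ∑ s, B k s * M s j := by
    intro k j
    have h := congrFun (congrFun hinv k) j
    simp only [Matrix.mul_apply, Matrix.sub_apply, Matrix.one_apply, sub_mul,
      Finset.sum_sub_distrib] at h
    have h1 : (∑ s, (if k = s then (1:ℝ) else 0) * M s j) = M k j := by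
      simp [ite_mul]
    rw [h1] at h
    linarith [h]
  -- M k j = 0 when k < j
  have hzero : ∀ k j : Fin p, (k:ℕ) < (j:ℕ) → M k j = 0 := by
    have H : ∀ n : ℕ, ∀ k j : Fin p, (k:ℕ) = n → (k:ℕ) < (j:ℕ) → M k j = 0 := by
      intro n
      induction n using Nat.strongRecOn with
      | ind n ih' =>
      intro k j hk hkj
      have ih : ∀ s : Fin p, s < k → ∀ j : Fin p, (s:ℕ) < (j:ℕ) → M s j = 0 :=
        fun s hs j hj => ih' (s:ℕ) (hk ▸ hs) s j rfl hj
      rw [hrec]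
      have hne : k ≠ j := fun h => by simp [h] at hkj
      rw [if_neg hne]
      have : ∀ s, B k s * M s j = 0 := by
        intro s
        rcases le_or_gt k s with h | h
        · simp [hB k s h]
        · rw [ih s h j (lt_trans h hkj), mul_zero]
      simp [this]
    exact fun k j => H (k:ℕ) k j rfl
  have hnn : ∀ k j : Fin p, 0 ≤ M k j := by
    have H : ∀ n : ℕ, ∀ k : Fin p, (k:ℕ) = n → ∀ j : Fin p, 0 ≤ M k j := by
      intro n
      induction n using Nat.strongRecOn with
      | ind n ih' =>
      intro k hk j
      have ih : ∀ s : Fin p, s < k → ∀ j : Fin p, 0 ≤ M s j :=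
        fun s hs j => ih' (s:ℕ) (hk ▸ hs) s rfl j
      rw [hrec]
      have : 0 ≤ ∑ s, B k s * M s j := by
        apply Finset.sum_nonneg
        intro s _
        rcases le_or_gt k s with h | h
        · simp [hB k s h]
        · exact mul_nonneg (hBnn k s) (ih s h j)
      positivity
    exact fun k => H (k:ℕ) k rfl
  have hdiag : ∀ r : Fin p, M r r = 1 := by
    intro r
    rw [hrec, if_pos rfl]
    have : ∀ s, B r s * M s r = 0 := by
      intro s
      rcases le_or_gt r s with h | h
      · simp [hB r s h]
      · rw [hzero s r h, mul_zero]
    simp [this]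
  refine ⟨hnn, ?_⟩
  have main : ∀ k j r : Fin p, j ≠ r → r ≠ k → j ≠ k → M k r * M r j ≤ M k j := by
    have H : ∀ n : ℕ, ∀ k : Fin p, (k:ℕ) = n → ∀ j r : Fin p,
        j ≠ r → r ≠ k → j ≠ k → M k r * M r j ≤ M k j := by
      intro n
      induction n using Nat.strongRecOn with
      | ind n ih' =>
      intro k hk j r hjr hrk hjk
      have ih : ∀ s : Fin p, s < k → ∀ j r : Fin p,
          j ≠ r → r ≠ s → j ≠ s → M s r * M r j ≤ M s j :=
        fun s hs => ih' (s:ℕ) (hk ▸ hs) s rfl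
      rcases lt_or_gt_of_ne hrk with hrklt | hkr
      case inr =>
        -- k < r, so M k r = 0
        rw [hzero k r hkr, zero_mul]
        exact hnn k j
      case inl =>
        -- r < k
        have hMkj : M k j = ∑ s, B k s * M s j := by
          rw [hrec, if_neg hjk.symm, zero_add]
        have hMkr : M k r = ∑ s, B k s * M s r := by
          rw [hrec, if_neg (Ne.symm hrk), zero_add]
        rw [hMkj, hMkr, Finset.sum_mul]
        apply Finset.sum_le_sum
        intro s _
        rw [mul_assoc]
        rcases le_or_gt k s with hks | hsk
        · simp [hB k s hks]
        · apply mul_le_mul_of_nonneg_left _ (hBnn k s)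
          rcases eq_or_ne s r with rfl | hsr
          · rw [hdiag s, one_mul]
          rcases eq_or_ne s j with rfl | hsj
          · rw [hdiag s]
            rcases lt_or_gt_of_ne hjr with h | h
            · rw [hzero s r h, zero_mul]; exact zero_le_one
            · rw [hzero r s h, mul_zero]; exact zero_le_one
          · exact ih s hsk j r hjr (Ne.symm hsr) (Ne.symm hsj)
    exact fun k => H (k:ℕ) k rfl
  intro j r k h1 h2 h3
  exact main k j r h1 h2 h3
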